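/- Let G be a connected (k,2)-expander that contains no Hamilton cycle. Then G has at least (k+1)²/2 boosters. -/

import Mathlib

/-- The external neighbourhood of a vertex set `U`. -/
def extNbhd {V : Type*} (G : SimpleGraph V) (U : Set V) : Set V :=
  {v | v ∉ U ∧ ∃ u ∈ U, G.Adj u v}

/-- A `(k,α)`-expander: every vertex set of size at most `k` has external neighbourhood
of size at least `α` times its own. -/
def isExpander {V : Type*} (H : SimpleGraph V) (k α : ℝ) : Prop :=
  ∀ U : Set V, (U.ncard : ℝ) ≤ k → α * U.ncard ≤ ((extNbhd H U).ncard : ℝ)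

/-- The number of edges of a longest path. -/
noncomputable def longestPathLength {V : Type*} (H : SimpleGraph V) : ℕ :=
  sSup {k : ℕ | ∃ (u v : V) (w : H.Walk u v), w.IsPath ∧ w.length = k}

/-- A graph contains a Hamilton cycle. -/
def hasHamiltonCycle {V : Type*} [DecidableEq V] (H : SimpleGraph V) : Prop :=
  ∃ (a : V) (w : H.Walk a a), w.IsHamiltonianCycle

/-- `{u,v}` is a booster for `H`: it is a non-edge whose addition creates a Hamilton cycle,
or a path longer than a longest path of `H`. -/
def isBooster {V : Type*} [DecidableEq V] (H : SimpleGraph V) (u v : V) : Prop :=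
  u ≠ v ∧ ¬ H.Adj u v ∧
    (hasHamiltonCycle (H ⊔ SimpleGraph.fromEdgeSet {s(u, v)}) ∨
      longestPathLength H < longestPathLength (H ⊔ SimpleGraph.fromEdgeSet {s(u, v)}))

set_option linter.unusedSectionVars false
set_option linter.unusedVariables false

open List SimpleGraph

namespace PosaAux
variable {V : Type*}


variable {V : Type*}

lemma pair_infix_iff_get {a b : V} {L : List V} :
    [a, b] <:+: L ↔ ∃ i, L[i]? = some a ∧ L[i+1]? = some b := by
  constructor
  · rintro ⟨s, t, rfl⟩
    refine ⟨s.length, ?_, ?_⟩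
    · rw [List.append_assoc, List.getElem?_append_right le_rfl]
      simp
    · rw [List.append_assoc, List.getElem?_append_right (by omega)]
      simp
  · rintro ⟨i, ha, hb⟩
    have hi1 : i + 1 < L.length := (List.getElem?_eq_some_iff.1 hb).1
    have hi : i < L.length := by omega
    have hga : L[i] = a := by
      have := L.getElem?_eq_getElem hi; rw [this] at ha; exact Option.some_injective _ ha
    have hgb : L[i+1] = b := by
      have := L.getElem?_eq_getElem hi1; rw [this] at hb; exact Option.some_injective _ hb
    refine ⟨L.take i, L.drop (i+2), ?_⟩
    have h1 : L.drop i = a :: L.drop (i+1) := by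
      rw [List.drop_eq_getElem_cons hi, hga]
    have h2 : L.drop (i+1) = b :: L.drop (i+2) := by
      rw [List.drop_eq_getElem_cons hi1, hgb]
    calc L.take i ++ [a, b] ++ L.drop (i+2)
        = L.take i ++ L.drop i := by rw [h1, h2]; simp
      _ = L := List.take_append_drop i L

lemma mem_of_pair_infix_left {a b : V} {L : List V} (h : [a, b] <:+: L) : a ∈ L :=
  h.subset (by simp)

lemma mem_of_pair_infix_right {a b : V} {L : List V} (h : [a, b] <:+: L) : b ∈ L :=
  h.subset (by simp)

/-- successor is unique in a nodup list -/
lemma succ_unique {a b c : V} {L : List V} (hd : L.Nodup)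
    (h1 : [a, b] <:+: L) (h2 : [a, c] <:+: L) : b = c := by
  obtain ⟨i, hia, hib⟩ := pair_infix_iff_get.1 h1
  obtain ⟨j, hja, hjc⟩ := pair_infix_iff_get.1 h2
  have hi : i < L.length := (List.getElem?_eq_some_iff.1 hia).1
  have hij : i = j := (List.getElem?_inj hi hd).1 (hia.trans hja.symm)
  subst hij
  have := hjc.symm.trans hib
  exact (Option.some_injective _ this).symm

lemma pred_unique {a b c : V} {L : List V} (hd : L.Nodup)
    (h1 : [a, c] <:+: L) (h2 : [b, c] <:+: L) : a = b := by
  obtain ⟨i, hia, hib⟩ := pair_infix_iff_get.1 h1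
  obtain ⟨j, hja, hjc⟩ := pair_infix_iff_get.1 h2
  have hi : i + 1 < L.length := (List.getElem?_eq_some_iff.1 hib).1
  have hij : i + 1 = j + 1 := (List.getElem?_inj hi hd).1 (hib.trans hjc.symm)
  have hij' : i = j := by omega
  subst hij'
  exact (Option.some_injective _ (hja.symm.trans hia)).symm

/-- the last element of a nodup list has no successor -/
lemma not_succ_getLast {a b : V} {L : List V} (hd : L.Nodup)
    (h : [a, b] <:+: L) : L.getLast? ≠ some a := by
  intro hlast
  obtain ⟨i, hia, hib⟩ := pair_infix_iff_get.1 h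
  have hi1 : i + 1 < L.length := (List.getElem?_eq_some_iff.1 hib).1
  have hi : i < L.length := by omega
  have hne : L ≠ [] := by rintro rfl; simp at hi
  have hlast' : L[L.length - 1]? = some a := by
    rw [List.getLast?_eq_getElem? ] at hlast
    convert hlast using 2
  have := (List.getElem?_inj hi hd).1 (hia.trans hlast'.symm)
  omega

/-- the head of a nodup list has no predecessor -/
lemma not_pred_head {a b : V} {L : List V} (hd : L.Nodup)
    (h : [a, b] <:+: L) : L.head? ≠ some b := by
  intro hhead
  obtain ⟨i, hia, hib⟩ := pair_infix_iff_get.1 h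
  have hi1 : i + 1 < L.length := (List.getElem?_eq_some_iff.1 hib).1
  have hhead' : L[0]? = some b := by
    rwa [← List.head?_eq_getElem?]
  have := (List.getElem?_inj hi1 hd).1 (hib.trans hhead'.symm)
  omega



variable {V : Type*}

lemma pair_prefix_iff {a b : V} {L : List V} :
    [a, b] <+: L ↔ L.head? = some a ∧ L.tail.head? = some b := by
  constructor
  · rintro ⟨t, rfl⟩; simp
  · intro ⟨h1, h2⟩
    match L, h1, h2 with
    | x :: y :: t, h1, h2 =>
      simp at h1 h2
      exact ⟨t, by simp [h1, h2]⟩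

lemma pair_infix_append {a b : V} {X Y : List V} :
    [a, b] <:+: X ++ Y ↔
      [a, b] <:+: X ∨ [a, b] <:+: Y ∨ (X.getLast? = some a ∧ Y.head? = some b) := by
  induction X with
  | nil => simp
  | cons x X ih =>
    rw [List.cons_append, List.infix_cons_iff, pair_prefix_iff, List.infix_cons_iff,
      pair_prefix_iff, ih]
    constructor
    · rintro (⟨h1, h2⟩ | hX | hY | ⟨hlast, hhead⟩)
      · simp only [List.head?_cons, Option.some.injEq] at h1
        subst h1
        match X, h2 with
        | [], h2 =>
          simp at h2
          exact Or.inr <| Or.inr ⟨rfl, h2⟩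
        | c :: X, h2 =>
          simp at h2
          exact Or.inl <| Or.inl ⟨by simp [h2], by simp [h2]⟩
      · exact Or.inl (Or.inr hX)
      · exact Or.inr (Or.inl hY)
      · have hXne : X ≠ [] := by rintro rfl; simp at hlast
        refine Or.inr (Or.inr ⟨?_, hhead⟩)
        rw [List.getLast?_cons]
        simp [hlast]
    · rintro ((⟨h1, h2⟩ | hX) | hY | ⟨hlast, hhead⟩)
      · simp only [List.head?_cons, Option.some.injEq] at h1
        subst h1
        refine Or.inl ⟨rfl, ?_⟩
        match X, h2 with
        | c :: X, h2 => simp at h2 ⊢; simp [h2]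
      · exact Or.inr (Or.inl hX)
      · exact Or.inr (Or.inr (Or.inl hY))
      · match X, hlast with
        | [], hlast =>
          simp at hlast
          subst hlast
          exact Or.inl ⟨rfl, by simpa using hhead⟩
        | c :: X, hlast =>
          refine Or.inr (Or.inr (Or.inr ⟨?_, hhead⟩))
          rw [List.getLast?_cons] at hlast
          rcases h : (c :: X).getLast? with _ | y
          · simp at h
          · rw [h] at hlast; simpa using hlast

lemma pair_infix_reverse {a b : V} {L : List V} :
    [a, b] <:+: L.reverse ↔ [b, a] <:+: L := by
  constructor
  · intro h
    have := h.reverse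
    simpa using this
  · intro h
    have := h.reverse
    simpa using this

/-- `a` and `b` are adjacent (consecutive, in either order) in the list `L`. -/
def adjIn (L : List V) (a b : V) : Prop := [a, b] <:+: L ∨ [b, a] <:+: L

lemma adjIn_symm {L : List V} {a b : V} (h : adjIn L a b) : adjIn L b a := h.symm

lemma adjIn.mem_left {L : List V} {a b : V} (h : adjIn L a b) : a ∈ L := by
  rcases h with h | h
  · exact h.subset (by simp)
  · exact h.subset (by simp)

lemma adjIn_of_infix {L M : List V} {a b : V} (h : L <:+: M) (ha : adjIn L a b) :
    adjIn M a b := by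
  rcases ha with ha | ha
  · exact Or.inl (ha.trans h)
  · exact Or.inr (ha.trans h)

lemma adjIn_reverse {L : List V} {a b : V} : adjIn L.reverse a b ↔ adjIn L a b := by
  unfold adjIn
  rw [pair_infix_reverse, pair_infix_reverse, or_comm]

lemma chain'_of_adjIn {R : V → V → Prop} {L : List V} (hc : List.Chain' R L)
    {a b : V} (h : [a, b] <:+: L) : R a b := by
  have := hc.infix h
  simpa using this

lemma adj_of_adjIn {G : SimpleGraph V} {L : List V} (hc : List.Chain' G.Adj L)
    {a b : V} (h : adjIn L a b) : G.Adj a b := by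
  rcases h with h | h
  · exact chain'_of_adjIn hc h
  · exact (chain'_of_adjIn hc h).symm

/-- The key splitting: adjacency in the rotated list `A ++ p :: B.reverse`. -/
lemma adjIn_rotate {A B : List V} {p a b : V} (hB : B ≠ [])
    (h : adjIn (A ++ p :: B.reverse) a b) :
    adjIn (A ++ p :: B) a b ∨ s(a, b) = s(p, B.getLast hB) := by
  have hsplit : ∀ x y : V, [x, y] <:+: A ++ p :: B.reverse →
      [x, y] <:+: A ++ [p] ∨ [y, x] <:+: B ∨ (x = p ∧ y = B.getLast hB) := by
    intro x y hxy
    have : A ++ p :: B.reverse = (A ++ [p]) ++ B.reverse := by simp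
    rw [this, pair_infix_append] at hxy
    rcases hxy with h1 | h2 | ⟨h3, h4⟩
    · exact Or.inl h1
    · exact Or.inr (Or.inl (pair_infix_reverse.1 h2))
    · refine Or.inr (Or.inr ⟨?_, ?_⟩)
      · have : p = x := by simpa using h3
        exact this.symm
      · rw [List.head?_reverse] at h4
        rw [List.getLast?_eq_getLast hB] at h4
        have : B.getLast hB = y := by simpa using h4
        exact this.symm
  have hAp : (A ++ [p]) <:+: A ++ p :: B := ⟨[], B, by simp⟩
  have hBsub : B <:+: A ++ p :: B := ⟨A ++ [p], [], by simp⟩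
  rcases h with h | h
  · rcases hsplit a b h with h1 | h2 | ⟨h3, h4⟩
    · exact Or.inl (adjIn_of_infix hAp (Or.inl h1))
    · exact Or.inl (adjIn_of_infix hBsub (Or.inr h2))
    · exact Or.inr (by rw [h3, h4])
  · rcases hsplit b a h with h1 | h2 | ⟨h3, h4⟩
    · exact Or.inl (adjIn_of_infix hAp (Or.inr h1))
    · exact Or.inl (adjIn_of_infix hBsub (Or.inl h2))
    · exact Or.inr (by rw [h3, h4, Sym2.eq_swap])

/-- adjacency in the un-rotated list, vs the rotated one. -/
lemma adjIn_unrotate {A B : List V} {p a b : V} (hB : B ≠ [])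
    (h : adjIn (A ++ p :: B) a b) :
    adjIn (A ++ p :: B.reverse) a b ∨ s(a, b) = s(p, B.head hB) := by
  have key := adjIn_rotate (B := B.reverse) (A := A) (p := p)
    (by simpa using hB) (a := a) (b := b)
  rw [List.reverse_reverse] at key
  have := key h
  rcases this with h1 | h2
  · exact Or.inl h1
  · right
    rw [h2]
    congr 1
    rw [List.getLast_reverse]




variable {V : Type*}

/-- Build a walk from a list with chained adjacencies. -/
def toWalk (G : SimpleGraph V) : (l : List V) → List.Chain' G.Adj l → (h : l ≠ []) →
    G.Walk (l.head h) (l.getLast h)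
  | [a], _, _ => Walk.nil
  | a :: b :: t, h, _ =>
    (Walk.cons (List.isChain_cons_cons.1 h).1
      ((toWalk G (b :: t) (show List.Chain' G.Adj (b :: t) from (List.isChain_cons_cons.1 h).2) (by simp)).copy List.head_cons rfl)).copy List.head_cons.symm
        ((List.getLast_cons (by simp)).symm)

@[simp]
lemma support_toWalk (G : SimpleGraph V) : ∀ (l : List V) (hc : List.Chain' G.Adj l)
    (h : l ≠ []), (toWalk G l hc h).support = l
  | [a], _, _ => rfl
  | a :: b :: t, h, _ => by
    rw [toWalk]
    simp only [Walk.support_copy, Walk.support_cons]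
    rw [support_toWalk G (b :: t)]

lemma length_toWalk (G : SimpleGraph V) (l : List V) (hc : List.Chain' G.Adj l)
    (h : l ≠ []) : (toWalk G l hc h).length + 1 = l.length := by
  have := (toWalk G l hc h).length_support
  rw [support_toWalk] at this
  omega

/-- A good list: a path, as a list. -/
def good (G : SimpleGraph V) (l : List V) : Prop :=
  l ≠ [] ∧ List.Chain' G.Adj l ∧ l.Nodup

lemma isPath_toWalk {G : SimpleGraph V} {l : List V} (hg : good G l) :
    (toWalk G l hg.2.1 hg.1).IsPath := by
  rw [Walk.isPath_def, support_toWalk]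
  exact hg.2.2

variable [Fintype V]

lemma bddAbove_lengths (G : SimpleGraph V) :
    BddAbove {k : ℕ | ∃ (u v : V) (w : G.Walk u v), w.IsPath ∧ w.length = k} := by
  refine ⟨Fintype.card V, ?_⟩
  rintro n ⟨u, v, w, hw, rfl⟩
  exact le_of_lt hw.length_lt

lemma good_length_le {G : SimpleGraph V} {l : List V} (hg : good G l) :
    l.length ≤ longestPathLength G + 1 := by
  have hmem : l.length - 1 ∈ {k : ℕ | ∃ (u v : V) (w : G.Walk u v), w.IsPath ∧ w.length = k} := by
    refine ⟨_, _, toWalk G l hg.2.1 hg.1, isPath_toWalk hg, ?_⟩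
    have := length_toWalk G l hg.2.1 hg.1
    omega
  have := le_csSup (bddAbove_lengths G) hmem
  have hl : 1 ≤ l.length := List.length_pos_iff.2 hg.1
  unfold longestPathLength
  omega

lemma lt_longestPathLength_of_good {G : SimpleGraph V} {l : List V} (hg : good G l)
    {m : ℕ} (hm : m + 1 < l.length) : m < longestPathLength G := by
  have hmem : l.length - 1 ∈ {k : ℕ | ∃ (u v : V) (w : G.Walk u v), w.IsPath ∧ w.length = k} := by
    refine ⟨_, _, toWalk G l hg.2.1 hg.1, isPath_toWalk hg, ?_⟩
    have := length_toWalk G l hg.2.1 hg.1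
    omega
  have := le_csSup (bddAbove_lengths G) hmem
  unfold longestPathLength
  omega

lemma exists_max_good (G : SimpleGraph V) [Nonempty V] :
    ∃ l : List V, good G l ∧ l.length = longestPathLength G + 1 := by
  have hne : {k : ℕ | ∃ (u v : V) (w : G.Walk u v), w.IsPath ∧ w.length = k}.Nonempty := by
    obtain ⟨v⟩ := ‹Nonempty V›
    exact ⟨0, v, v, Walk.nil, Walk.IsPath.nil, rfl⟩
  have hmem := Nat.sSup_mem hne (bddAbove_lengths G)
  obtain ⟨u, v, w, hw, hlen⟩ := hmem
  refine ⟨w.support, ⟨w.support_ne_nil, w.isChain_adj_support, hw.2⟩, ?_⟩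
  rw [w.length_support, hlen]
  rfl


lemma chain'_rev {G : SimpleGraph V} {l : List V} (h : List.Chain' G.Adj l) :
    List.Chain' G.Adj l.reverse :=
  List.isChain_reverse.2 (h.imp fun _ _ hh => hh.symm)

lemma edge_mem_toWalk {G : SimpleGraph V} : ∀ (l : List V) (hc : List.Chain' G.Adj l)
    (h : l ≠ []) {x y : V}, s(x, y) ∈ (toWalk G l hc h).edges → adjIn l x y
  | [a], _, _, x, y => by simp [toWalk]
  | a :: b :: t, h, _, x, y => by
    rw [toWalk]
    simp only [Walk.edges_copy, Walk.edges_cons, List.mem_cons]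
    rintro (heq | hmem)
    · rw [Sym2.eq_iff] at heq
      rcases heq with ⟨rfl, rfl⟩ | ⟨rfl, rfl⟩
      · exact Or.inl ⟨[], t, by simp⟩
      · exact Or.inr ⟨[], t, by simp⟩
    · exact adjIn_of_infix ⟨[a], [], by simp⟩ (edge_mem_toWalk (b :: t) _ (by simp) hmem)

/-- In a connected graph, if a set contains some vertex but not all, there is an edge across. -/
lemma exists_crossing_edge {G : SimpleGraph V} (T : Set V) {a b : V}
    (ha : a ∈ T) (hb : b ∉ T) (w : G.Walk a b) :
    ∃ x ∈ T, ∃ y ∉ T, G.Adj x y := by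
  induction w with
  | nil => exact absurd ha hb
  | cons h p ih =>
    rename_i u v _
    by_cases hv : v ∈ T
    · exact ih hv hb
    · exact ⟨u, ha, v, hv, h⟩

variable [Fintype V] [DecidableEq V]

/-- Closing a maximum-length path into a cycle gives a Hamilton cycle or a longer path. -/
lemma closeCycle {G : SimpleGraph V} (hconn : G.Connected) (hV3 : 3 ≤ Fintype.card V)
    (H : SimpleGraph V) (hGH : G ≤ H) (L : List V) (hne : L ≠ [])
    (hchain : List.Chain' G.Adj L) (hnodup : L.Nodup)
    (hlen : L.length = longestPathLength G + 1)
    (hadj : H.Adj (L.getLast hne) (L.head hne)) :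
    hasHamiltonCycle H ∨ longestPathLength G < longestPathLength H := by
  have hchainH : List.Chain' H.Adj L := hchain.imp (fun a b h => hGH h)
  have hLcons : L = L.head hne :: L.tail := (List.cons_head_tail hne).symm
  have hheadtail : L.head hne ∉ L.tail := by
    intro hmem
    have h2 := hnodup
    rw [hLcons, List.nodup_cons] at h2
    exact h2.1 hmem
  by_cases huniv : ∀ v : V, v ∈ L
  · -- Hamilton cycle case
    left
    have hlen3 : 3 ≤ L.length := by
      have : Fintype.card V ≤ L.length := by
        classical
        have h1 : (Finset.univ : Finset V) ⊆ L.toFinset := fun v _ => by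
          simpa using huniv v
        have := Finset.card_le_card h1
        rwa [List.toFinset_card_of_nodup hnodup, Finset.card_univ] at this
      omega
    set w := toWalk H L hchainH hne with hw
    have hwpath : w.IsPath := isPath_toWalk ⟨hne, hchainH, hnodup⟩
    set c := w.concat hadj with hc
    refine ⟨L.head hne, c, ?_⟩
    have hsupc : c.support = L ++ [L.head hne] := by
      rw [hc, Walk.support_concat, hw, support_toWalk]
    have htail : c.support.tail = L.tail ++ [L.head hne] := by
      rw [hsupc, List.tail_append]
      simp [hne]
    have hcycle : c.IsCycle := by
      rw [Walk.isCycle_def]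
      refine ⟨⟨?_⟩, ?_, ?_⟩
      · -- edges nodup
        rw [hc, Walk.edges_concat, List.concat_eq_append, List.nodup_append']
        refine ⟨hwpath.isTrail.edges_nodup, List.nodup_singleton _, ?_⟩
        intro e he he'
        simp only [List.mem_singleton] at he'
        subst he'
        have hadjL := edge_mem_toWalk L hchainH hne he
        rcases hadjL with hinf | hinf
        · exact not_pred_head hnodup hinf (by rw [List.head?_eq_head hne])
        · obtain ⟨i, hia, hib⟩ := pair_infix_iff_get.1 hinf
          have h0 : L[0]? = some (L.head hne) := by
            rw [← List.head?_eq_getElem?, List.head?_eq_head]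
          have hi1 : i + 1 < L.length := (List.getElem?_eq_some_iff.1 hib).1
          have hii := (List.getElem?_inj (by omega : i < L.length) hnodup).1 (hia.trans h0.symm)
          subst hii
          have hlast : L[L.length - 1]? = some (L.getLast hne) := by
            rw [← List.getLast?_eq_getElem?, List.getLast?_eq_getLast hne]
          have := (List.getElem?_inj hi1 hnodup).1 (hib.trans hlast.symm)
          omega
      · -- c ≠ nil
        intro hnil
        have : c.length = 0 := by rw [hnil]; rfl
        rw [hc, Walk.length_concat] at this
        omega
      · -- support tail nodup
        rw [htail, List.nodup_append']
        refine ⟨(hLcons ▸ hnodup).of_cons, List.nodup_singleton _, ?_⟩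
        intro z hz hz'
        simp only [List.mem_singleton] at hz'
        subst hz'
        exact hheadtail hz
    rw [Walk.isHamiltonianCycle_iff_isCycle_and_support_count_tail_eq_one]
    refine ⟨hcycle, fun a => ?_⟩
    rw [htail, List.count_append]
    by_cases ha : a = L.head hne
    · subst ha
      rw [List.count_eq_zero_of_not_mem hheadtail]
      simp
    · have haT : a ∈ L.tail := by
        have haL := huniv a
        rw [hLcons, List.mem_cons] at haL
        tauto
      rw [List.count_eq_one_of_mem (hLcons ▸ hnodup).of_cons haT]
      simp [List.count_eq_zero, ha]
  · -- longer path case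
    right
    push_neg at huniv
    obtain ⟨y0, hy0⟩ := huniv
    have hhead : L.head hne ∈ {v | v ∈ L} := List.head_mem hne
    obtain ⟨x, hx, y, hy, hxy⟩ :=
      exists_crossing_edge {v | v ∈ L} hhead hy0 (hconn (L.head hne) y0).some
    obtain ⟨A, Bl, hAB⟩ := List.append_of_mem hx
    set M := y :: x :: (A.reverse ++ Bl.reverse) with hM
    have hperm : (x :: (A.reverse ++ Bl.reverse)) ~ L := by
      rw [hAB]
      calc x :: (A.reverse ++ Bl.reverse) ~ x :: (A ++ Bl) :=
            List.Perm.cons _ (List.Perm.append A.reverse_perm Bl.reverse_perm)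
        _ ~ A ++ x :: Bl := List.perm_middle.symm
    have hLsplit : List.Chain' G.Adj (A ++ x :: Bl) := hAB ▸ hchain
    unfold List.Chain' at hLsplit
    rw [List.isChain_append] at hLsplit
    have hchA : List.Chain' G.Adj A := hLsplit.1
    have hchxB := hLsplit.2.1
    have hcross := hLsplit.2.2
    have hAx_last : (x :: A.reverse).getLast? = some (L.head hne) := by
      cases A with
      | nil =>
        have h0 : L.head? = some x := by rw [hAB]; rfl
        rw [List.head?_eq_head hne] at h0
        have heq : L.head hne = x := Option.some_injective _ h0
        rw [heq]; rfl
      | cons a A' =>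
        have h1 : (x :: (a :: A').reverse).getLast? = ((a :: A').reverse).getLast? := by
          rw [show x :: (a :: A').reverse = [x] ++ (a :: A').reverse from rfl,
            List.getLast?_append]
          simp [List.getLast?_reverse]
        rw [h1, List.getLast?_reverse]
        have h0 : L.head? = some a := by rw [hAB]; rfl
        rw [List.head?_eq_head hne] at h0
        have heq : L.head hne = a := Option.some_injective _ h0
        rw [heq]; rfl
    have hBl_last : ∀ b ∈ Bl.reverse.head?, b = L.getLast hne := by
      intro b hb
      rw [List.head?_reverse] at hb
      have hBne : Bl ≠ [] := by rintro rfl; simp at hb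
      have : L.getLast hne = Bl.getLast hBne := by
        have h2 : L.getLast? = Bl.getLast? := by
          rw [hAB, List.getLast?_append]
          rw [show (x :: Bl).getLast? = Bl.getLast? from by
            rw [show x :: Bl = [x] ++ Bl from rfl, List.getLast?_append]
            simp [List.getLast?_eq_getLast hBne]]
          simp [List.getLast?_eq_getLast hBne]
        rw [List.getLast?_eq_getLast hne, List.getLast?_eq_getLast hBne] at h2
        exact Option.some_injective _ h2
      rw [List.getLast?_eq_getLast hBne] at hb
      rw [this]
      exact (Option.some_injective _ hb).symm
    have hgood : good H M := by
      refine ⟨by simp [hM], ?_, ?_⟩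
      · -- chain'
        unfold List.Chain'
        rw [hM, show y :: x :: (A.reverse ++ Bl.reverse) = (y :: x :: A.reverse) ++ Bl.reverse
          from by simp, List.isChain_append]
        refine ⟨?_, ?_, ?_⟩
        · rw [List.isChain_cons_cons]
          refine ⟨hGH hxy.symm, ?_⟩
          rw [List.isChain_cons]
          refine ⟨?_, (chain'_rev hchA).imp fun _ _ hh => hGH hh⟩
          intro b hb
          rw [List.head?_reverse] at hb
          exact hGH (hcross b hb x (by simp)).symm
        · exact (chain'_rev ((List.isChain_cons.1 hchxB).2)).imp fun _ _ hh => hGH hh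
        · intro a ha b hb
          have ha2 : (x :: A.reverse).getLast? = some a := by
            rw [show (y :: x :: A.reverse).getLast? = (x :: A.reverse).getLast? from by
              rw [show y :: x :: A.reverse = [y] ++ (x :: A.reverse) from rfl,
                List.getLast?_append]
              simp [List.getLast?_eq_getLast (by simp : x :: A.reverse ≠ [])]] at ha
            exact ha
          rw [hAx_last] at ha2
          have : a = L.head hne := (Option.some_injective _ ha2).symm
          subst this
          rw [hBl_last b hb]
          exact hadj.symm
      · -- nodup
        rw [hM]
        refine List.nodup_cons.2 ⟨?_, ?_⟩
        · intro hmem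
          apply hy
          simp only [List.mem_cons, List.mem_append, List.mem_reverse] at hmem
          show y ∈ L
          rcases hmem with rfl | h | h
          · exact hx
          · rw [hAB]; simp [h]
          · rw [hAB]; simp [h]
        · exact hperm.nodup_iff.2 hnodup
    have hlong : longestPathLength G + 1 < M.length := by
      have hMlen : M.length = L.length + 1 := by
        rw [hM, hAB]
        simp
        omega
      omega
    exact lt_longestPathLength_of_good hgood hlong

/-- Pósa rotations of a path (as a list), keeping the first endpoint fixed. -/
inductive Rot (G : SimpleGraph V) (P : List V) : List V → Prop
  | refl : Rot G P P
  | rotate {A : List V} {p : V} {B : List V} (hB : B ≠ [])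
      (h : Rot G P (A ++ p :: B)) (hadj : G.Adj (B.getLast hB) p) :
      Rot G P (A ++ p :: B.reverse)

/-- The set of endpoints reachable by rotations. -/
def rotEnds (G : SimpleGraph V) (P : List V) : Set V :=
  {v | ∃ Q, Rot G P Q ∧ Q.getLast? = some v}

lemma Rot.perm {G : SimpleGraph V} {P Q : List V} (h : Rot G P Q) : Q ~ P := by
  induction h with
  | refl => exact List.Perm.refl P
  | @rotate A p B hB h hadj ih =>
    refine List.Perm.trans ?_ ih
    exact (B.reverse_perm.cons p).append_left A

lemma Rot.ne_nil {G : SimpleGraph V} {P Q : List V} (h : Rot G P Q) (hP : P ≠ []) : Q ≠ [] := by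
  intro hQ
  exact hP (List.Perm.eq_nil (hQ ▸ h.perm).symm)

lemma Rot.head? {G : SimpleGraph V} {P Q : List V} (h : Rot G P Q) : Q.head? = P.head? := by
  induction h with
  | refl => rfl
  | @rotate A p B hB h hadj ih =>
    rw [← ih]
    cases A with
    | nil => rfl
    | cons a A' => rfl

lemma Rot.chain' {G : SimpleGraph V} {P Q : List V} (h : Rot G P Q)
    (hP : List.Chain' G.Adj P) : List.Chain' G.Adj Q := by
  induction h with
  | refl => exact hP
  | @rotate A p B hB h hadj ih =>
    unfold List.Chain' at ih ⊢
    rw [show A ++ p :: B = A ++ [p] ++ B from by simp, List.isChain_append] at ih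
    rw [show A ++ p :: B.reverse = A ++ [p] ++ B.reverse from by simp, List.isChain_append]
    refine ⟨ih.1, chain'_rev ih.2.1, ?_⟩
    intro a ha b hb
    rw [List.head?_reverse] at hb
    rw [List.getLast?_eq_getLast hB] at hb
    have hbe : b = B.getLast hB := (Option.some_injective _ hb).symm
    have hae : a = p := by
      have : (A ++ [p]).getLast? = some p := by rw [List.getLast?_append]; rfl
      rw [this] at ha
      exact (Option.some_injective _ ha).symm
    subst hbe hae
    exact hadj.symm

lemma Rot.nodup {G : SimpleGraph V} {P Q : List V} (h : Rot G P Q) (hP : P.Nodup) :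
    Q.Nodup := h.perm.nodup_iff.2 hP

/-- The "bad" set: rotation endpoints together with their path-neighbours on `P`. -/
def badSet (G : SimpleGraph V) (P : List V) : Set V :=
  rotEnds G P ∪ {x | ∃ s ∈ rotEnds G P, adjIn P s x}

/-- Key invariant : outside the bad set, rotated paths have the same adjacencies as `P`. -/
lemma Rot.adjIn_iff {G : SimpleGraph V} {P Q : List V} (h : Rot G P Q) (hP : P.Nodup) :
    ∀ a b : V, a ∉ badSet G P → (adjIn Q a b ↔ adjIn P a b) := by
  induction h with
  | refl => exact fun _ _ _ => Iff.rfl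
  | @rotate A p B hB h hadj ih =>
    have hlastS : B.getLast hB ∈ rotEnds G P := by
      refine ⟨A ++ p :: B, h, ?_⟩
      rw [List.getLast?_append, show (p :: B).getLast? = B.getLast? from by
        rw [show p :: B = [p] ++ B from rfl, List.getLast?_append]
        simp [List.getLast?_eq_getLast hB]]
      simp [List.getLast?_eq_getLast hB]
    have hBheadne : B.head? = some (B.head hB) := List.head?_eq_head hB
    have hheadS : B.head hB ∈ rotEnds G P := by
      refine ⟨A ++ p :: B.reverse, Rot.rotate hB h hadj, ?_⟩
      rw [List.getLast?_append, show (p :: B.reverse).getLast? = some (B.head hB) from by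
        rw [show p :: B.reverse = [p] ++ B.reverse from rfl, List.getLast?_append,
          List.getLast?_reverse, hBheadne]
        rfl]
      rfl
    have hadjQ_phead : adjIn (A ++ p :: B) p (B.head hB) := by
      left
      refine ⟨A, B.tail, ?_⟩
      have hB' : B = B.head hB :: B.tail := (List.cons_head_tail hB).symm
      conv_rhs => rw [hB']
      simp
    intro a b ha
    constructor
    · intro hQ'
      rcases adjIn_rotate hB hQ' with hQ | heq
      · exact (ih a b ha).1 hQ
      · rw [Sym2.eq_iff] at heq
        rcases heq with ⟨rfl, rfl⟩ | ⟨rfl, rfl⟩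
        · -- a = p, b = getLast B : show p ∈ badSet for contradiction
          exfalso
          apply ha
          right
          exact ⟨B.head hB, hheadS, adjIn_symm ((ih a (B.head hB) ha).1 hadjQ_phead)⟩
        · exfalso
          exact ha (Or.inl hlastS)
    · intro hPadj
      have hQ := (ih a b ha).2 hPadj
      rcases adjIn_unrotate hB hQ with hQ' | heq
      · exact hQ'
      · exfalso
        rw [Sym2.eq_iff] at heq
        rcases heq with ⟨rfl, rfl⟩ | ⟨rfl, rfl⟩
        · exact ha (Or.inr ⟨B.head hB, hheadS, adjIn_symm hPadj⟩)
        · exact ha (Or.inl hheadS)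

/-- Rotating once more at a pivot adjacent to the endpoint. -/
lemma rotate_step {G : SimpleGraph V} {P Q : List V} (hrot : Rot G P Q) (hQne : Q ≠ [])
    {v : V} (hv : v ∈ Q) (hvlast : v ≠ Q.getLast hQne)
    (hadj : G.Adj (Q.getLast hQne) v) :
    ∃ w, [v, w] <:+: Q ∧ w ∈ rotEnds G P := by
  obtain ⟨A, B, hAB⟩ := List.append_of_mem hv
  have hBne : B ≠ [] := by
    rintro rfl
    apply hvlast
    have : Q.getLast? = some v := by rw [hAB, List.getLast?_append]; rfl
    rw [List.getLast?_eq_getLast hQne] at this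
    exact (Option.some_injective _ this).symm
  have hlastB : B.getLast hBne = Q.getLast hQne := by
    have : Q.getLast? = B.getLast? := by
      rw [hAB, List.getLast?_append, show (v :: B).getLast? = B.getLast? from by
        rw [show v :: B = [v] ++ B from rfl, List.getLast?_append]
        simp [List.getLast?_eq_getLast hBne]]
      simp [List.getLast?_eq_getLast hBne]
    rw [List.getLast?_eq_getLast hQne, List.getLast?_eq_getLast hBne] at this
    exact (Option.some_injective _ this).symm
  refine ⟨B.head hBne, ?_, ?_⟩
  · refine ⟨A, B.tail, ?_⟩
    rw [hAB]
    have hB' : B = B.head hBne :: B.tail := (List.cons_head_tail hBne).symm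
    conv_rhs => rw [hB']
    simp
  · refine ⟨A ++ v :: B.reverse, ?_, ?_⟩
    · exact Rot.rotate hBne (hAB ▸ hrot) (hlastB ▸ hadj)
    · rw [List.getLast?_append, show (v :: B.reverse).getLast? = some (B.head hBne) from by
        rw [show v :: B.reverse = [v] ++ B.reverse from rfl, List.getLast?_append,
          List.getLast?_reverse, List.head?_eq_head hBne]
        rfl]
      rfl

lemma head?_ne_getLast? {L : List V} (hd : L.Nodup) (hlen : 2 ≤ L.length) :
    L.head? ≠ L.getLast? := by
  intro h
  have hne : L ≠ [] := by rintro rfl; simp at hlen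
  rw [List.head?_eq_getElem?, List.getLast?_eq_getElem?] at h
  have := (List.getElem?_inj (by omega : 0 < L.length) hd).1 h
  omega

variable [Fintype V] [DecidableEq V]

/-- The main rotation lemma: from a maximum-length path we obtain at least `k+1`
booster partners for its head, each the head of some maximum-length path. -/
lemma lemA {G : SimpleGraph V} {k : ℕ} (hk : 0 < k)
    (hconn : G.Connected) (hexp : isExpander G (k : ℝ) 2)
    (hham : ¬ hasHamiltonCycle G) (hV3 : 3 ≤ Fintype.card V)
    (L : List V) (hg : good G L) (hlen : L.length = longestPathLength G + 1)
    (hlen2 : 2 ≤ L.length) :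
    ∃ S : Finset V, k + 1 ≤ S.card ∧ ∀ s ∈ S, isBooster G (L.head hg.1) s ∧
      ∃ Q : List V, good G Q ∧ Q.length = longestPathLength G + 1 ∧ Q.head? = some s := by
  classical
  obtain ⟨hne, hchain, hnodup⟩ := hg
  set x₀ := L.head hne with hx₀
  set S := rotEnds G L with hS
  have key : ∀ s ∈ S, ∃ (Q : List V) (hQne : Q ≠ []), Rot G L Q ∧
      good G Q ∧ Q.length = longestPathLength G + 1 ∧
      Q.head hQne = x₀ ∧ Q.getLast hQne = s := by
    rintro s ⟨Q, hrot, hlast⟩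
    have hQne : Q ≠ [] := hrot.ne_nil hne
    refine ⟨Q, hQne, hrot, ⟨hQne, hrot.chain' hchain, hrot.nodup hnodup⟩, ?_, ?_, ?_⟩
    · rw [hrot.perm.length_eq, hlen]
    · have := hrot.head?
      rw [List.head?_eq_head hQne, List.head?_eq_head hne] at this
      exact Option.some_injective _ this
    · rw [List.getLast?_eq_getLast hQne] at hlast
      exact Option.some_injective _ hlast
  have hlastS : L.getLast hne ∈ S := ⟨L, Rot.refl, List.getLast?_eq_getLast hne⟩
  have hSfin : S.Finite := Set.toFinite S
  have hx₀S : x₀ ∉ S := by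
    rintro hx
    obtain ⟨Q, hQne, _, hQg, hQlen, hQhead, hQlast⟩ := key _ hx
    have := head?_ne_getLast? hQg.2.2 (by omega)
    rw [List.head?_eq_head hQne, List.getLast?_eq_getLast hQne, hQhead, hQlast] at this
    exact this rfl
  have hboost : ∀ s ∈ S, isBooster G x₀ s := by
    intro s hs
    obtain ⟨Q, hQne, _, hQg, hQlen, hQhead, hQlast⟩ := key _ hs
    have hsx : x₀ ≠ s := fun h => hx₀S (h ▸ hs)
    have hnadj : ¬ G.Adj x₀ s := by
      intro hadj
      have := closeCycle hconn hV3 G le_rfl Q hQne hQg.2.1 hQg.2.2 hQlen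
        (by rw [hQhead, hQlast]; exact hadj.symm)
      rcases this with h | h
      · exact hham h
      · omega
    refine ⟨hsx, hnadj, ?_⟩
    have hHadj : (G ⊔ SimpleGraph.fromEdgeSet {s(x₀, s)}).Adj (Q.getLast hQne) (Q.head hQne) := by
      rw [hQhead, hQlast]
      right
      simp only [SimpleGraph.fromEdgeSet_adj, Set.mem_singleton_iff]
      exact ⟨Sym2.eq_swap, hsx.symm⟩
    exact closeCycle hconn hV3 _ le_sup_left Q hQne hQg.2.1 hQg.2.2 hQlen hHadj
  -- the external neighbourhood of S consists of path-neighbours of S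
  have hnbhd : extNbhd G S ⊆ {x | ∃ s ∈ S, [s, x] <:+: L} ∪ {x | ∃ s ∈ S, [x, s] <:+: L} := by
    rintro v ⟨hvS, u, huS, huv⟩
    obtain ⟨Q, hQne, hrotQ, hQg, hQlen, hQhead, hQlast⟩ := key _ huS
    have hvQ : v ∈ Q := by
      by_contra hvQ
      have hgood2 : good G (Q ++ [v]) := by
        refine ⟨by simp, ?_, ?_⟩
        · unfold List.Chain'
          rw [List.isChain_append]
          refine ⟨hQg.2.1, List.isChain_singleton v, ?_⟩
          intro a ha b hb
          simp only [List.head?_cons, Option.mem_def, Option.some.injEq] at hb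
          rw [List.getLast?_eq_getLast hQne, hQlast] at ha
          have ha' : u = a := by simpa using ha
          subst ha'
          subst hb
          exact huv
        · rw [List.nodup_append']
          exact ⟨hQg.2.2, List.nodup_singleton v, by
            intro z hz hz'
            simp only [List.mem_singleton] at hz'
            subst hz'
            exact hvQ hz⟩
      have := good_length_le hgood2
      rw [List.length_append, hQlen] at this
      simp at this
    have hvlast : v ≠ Q.getLast hQne := by
      rw [hQlast]; exact huv.ne'
    obtain ⟨w, hinfix, hwS⟩ := rotate_step hrotQ hQne hvQ hvlast (hQlast ▸ huv)
    by_cases hbad : v ∈ badSet G L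
    · rcases hbad with hbad | ⟨s, hsS, hadjin⟩
      · exact absurd hbad hvS
      · rcases hadjin with h1 | h1
        · exact Or.inl ⟨s, hsS, h1⟩
        · exact Or.inr ⟨s, hsS, h1⟩
    · exfalso
      have := (hrotQ.adjIn_iff hnodup v w hbad).1 (Or.inl hinfix)
      exact hbad (Or.inr ⟨w, hwS, adjIn_symm this⟩)
  -- cardinality bounds via the expander property
  set succs := {x | ∃ s ∈ S, [s, x] <:+: L} with hsuccs
  set preds := {x | ∃ s ∈ S, [x, s] <:+: L} with hpreds
  have hsucc : succs.ncard ≤ S.ncard - 1 := by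
    set f : V → V := fun x => if h : ∃ s ∈ S, [s, x] <:+: L then h.choose else x with hf
    have hfspec : ∀ x ∈ succs, f x ∈ S ∧ [f x, x] <:+: L := by
      intro x hx
      have hfx : f x = hx.choose := by simp only [hf]; exact dif_pos hx
      rw [hfx]
      exact ⟨hx.choose_spec.1, hx.choose_spec.2⟩
    have hle : succs.ncard ≤ (S \ {L.getLast hne}).ncard := by
      refine Set.ncard_le_ncard_of_injOn f (fun x hx => ?_) (fun x hx y hy hxy => ?_)
        (hSfin.diff)
      · obtain ⟨h1, h2⟩ := hfspec x hx
        refine ⟨h1, ?_⟩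
        simp only [Set.mem_singleton_iff]
        intro heq
        exact not_succ_getLast hnodup h2 (heq ▸ List.getLast?_eq_getLast hne)
      · obtain ⟨_, h2⟩ := hfspec x hx
        obtain ⟨_, h4⟩ := hfspec y hy
        exact succ_unique hnodup h2 (hxy ▸ h4)
    rwa [Set.ncard_diff_singleton_of_mem hlastS] at hle
  have hpred : preds.ncard ≤ S.ncard := by
    set f : V → V := fun x => if h : ∃ s ∈ S, [x, s] <:+: L then h.choose else x with hf
    have hfspec : ∀ x ∈ preds, f x ∈ S ∧ [x, f x] <:+: L := by
      intro x hx
      have hfx : f x = hx.choose := by simp only [hf]; exact dif_pos hx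
      rw [hfx]
      exact ⟨hx.choose_spec.1, hx.choose_spec.2⟩
    refine Set.ncard_le_ncard_of_injOn f (fun x hx => (hfspec x hx).1)
      (fun x hx y hy hxy => ?_) hSfin
    obtain ⟨_, h2⟩ := hfspec x hx
    obtain ⟨_, h4⟩ := hfspec y hy
    exact pred_unique hnodup h2 (hxy ▸ h4)
  have hS1 : 1 ≤ S.ncard := (Set.ncard_pos hSfin).2 ⟨_, hlastS⟩
  have hext : (extNbhd G S).ncard ≤ 2 * S.ncard - 1 := by
    have h1 := Set.ncard_le_ncard hnbhd (Set.toFinite _)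
    have h2 := Set.ncard_union_le succs preds
    omega
  -- expander property forces |S| ≥ k+1
  have hcard : k + 1 ≤ S.ncard := by
    by_contra hlt
    push_neg at hlt
    have hSk : (S.ncard : ℝ) ≤ (k : ℝ) := by
      exact_mod_cast Nat.lt_succ_iff.1 hlt
    have := hexp S hSk
    have h2 : 2 * S.ncard ≤ (extNbhd G S).ncard := by exact_mod_cast this
    omega
  -- assemble the Finset
  refine ⟨hSfin.toFinset, ?_, ?_⟩
  · have h := Set.ncard_coe_finset hSfin.toFinset
    rw [Set.Finite.coe_toFinset] at h
    omega
  · intro s hs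
    rw [Set.Finite.mem_toFinset] at hs
    refine ⟨hboost s hs, ?_⟩
    obtain ⟨Q, hQne, _, hQg, hQlen, hQhead, hQlast⟩ := key _ hs
    refine ⟨Q.reverse, ⟨by simp [hQne], chain'_rev hQg.2.1, by
      rw [List.nodup_reverse]; exact hQg.2.2⟩, by simpa using hQlen, ?_⟩
    rw [List.head?_reverse, List.getLast?_eq_getLast hQne, hQlast]


end PosaAux

open PosaAux in
/-- **Lemma (Pósa, boosters).** A connected `(k,2)`-expander with no Hamilton cycle has at
least `(k+1)²/2` boosters. -/
theorem boosters_of_expander {V : Type*} [Fintype V] [DecidableEq V]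
    (G : SimpleGraph V) (k : ℕ) (hk : 0 < k)
    (hconn : G.Connected) (hexp : isExpander G (k : ℝ) 2)
    (hham : ¬ hasHamiltonCycle G) :
    ((k : ℝ) + 1) ^ 2 / 2 ≤
      (({e : Sym2 V | ∃ u v : V, e = s(u, v) ∧ isBooster G u v}).ncard : ℝ) := by
  classical
  have hVne : Nonempty V := hconn.nonempty
  -- every vertex has at least two external neighbours
  have hdeg : ∀ v : V, 2 ≤ (extNbhd G {v}).ncard := by
    intro v
    have h1 : (({v} : Set V).ncard : ℝ) ≤ (k : ℝ) := by
      rw [Set.ncard_singleton]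
      exact_mod_cast hk
    have := hexp {v} h1
    rw [Set.ncard_singleton] at this
    have h2 : (2:ℝ) ≤ ((extNbhd G {v}).ncard : ℝ) := by push_cast at this; linarith
    exact_mod_cast h2
  -- |V| ≥ 3
  have hV3 : 3 ≤ Fintype.card V := by
    obtain ⟨v⟩ := hVne
    have h2 := hdeg v
    have hsub : extNbhd G {v} ⊆ Set.univ \ {v} := fun x hx => ⟨Set.mem_univ x, hx.1⟩
    have h3 := (Set.ncard_le_ncard hsub (Set.toFinite _)).trans_eq
      (Set.ncard_diff_singleton_of_mem (Set.mem_univ v))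
    have h4 : (Set.univ : Set V).ncard = Fintype.card V := by
      rw [Set.ncard_univ, Nat.card_eq_fintype_card]
    omega
  -- the longest path has length ≥ 1
  have hLP1 : 1 ≤ longestPathLength G := by
    obtain ⟨v⟩ := hVne
    obtain ⟨x, hx⟩ : (extNbhd G {v}).Nonempty := by
      rw [← Set.ncard_pos (Set.toFinite _)]
      have := hdeg v
      omega
    obtain ⟨_, u, hu, hadj⟩ := hx
    rw [Set.mem_singleton_iff] at hu
    subst hu
    have hgood : good G [u, x] := ⟨by simp, by unfold List.Chain'; simp [hadj], by simp [hadj.ne]⟩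
    have h5 := good_length_le hgood
    have h6 : (2:ℕ) ≤ longestPathLength G + 1 := by simpa using h5
    omega
  obtain ⟨L₀, hg₀, hlen₀⟩ := exists_max_good G
  have hlen2 : 2 ≤ L₀.length := by omega
  obtain ⟨S₀, hS₀card, hS₀⟩ := lemA hk hconn hexp hham hV3 L₀ hg₀ hlen₀ hlen2
  -- second-level rotation sets
  have hsecond : ∀ s ∈ S₀, ∃ T : Finset V, k + 1 ≤ T.card ∧ ∀ t ∈ T, isBooster G s t := by
    intro s hs
    obtain ⟨-, Q, hQg, hQlen, hQhead⟩ := hS₀ s hs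
    have hQhead' : Q.head hQg.1 = s := by
      rw [List.head?_eq_head hQg.1] at hQhead
      exact Option.some_injective _ hQhead
    obtain ⟨T, hTcard, hT⟩ := lemA hk hconn hexp hham hV3 Q hQg hQlen (by omega)
    exact ⟨T, hTcard, fun t ht => hQhead' ▸ (hT t ht).1⟩
  choose T hT1 hT2 using hsecond
  set pairs : Finset (V × V) :=
    S₀.attach.biUnion (fun s => (T s.1 s.2).image (fun t => (s.1, t))) with hpairs
  have hpairscard : (k + 1) * (k + 1) ≤ pairs.card := by
    rw [hpairs, Finset.card_biUnion]
    · have hsum := Finset.card_nsmul_le_sum S₀.attach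
        (fun s => ((T s.1 s.2).image (fun t => (s.1, t))).card) (k + 1) ?_
      · rw [Finset.card_attach] at hsum
        calc (k + 1) * (k + 1) ≤ S₀.card * (k + 1) := Nat.mul_le_mul_right _ hS₀card
          _ ≤ _ := by rwa [smul_eq_mul] at hsum
      · intro s _
        show k + 1 ≤ ((T s.1 s.2).image (fun t => (s.1, t))).card
        rw [Finset.card_image_of_injective _
          (fun a b h => by simpa using congrArg Prod.snd h)]
        exact hT1 s.1 s.2
    · intro x _ y _ hxy
      rw [Function.onFun, Finset.disjoint_left]
      rintro a ha ha'
      simp only [Finset.mem_image] at ha ha'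
      obtain ⟨t, _, rfl⟩ := ha
      obtain ⟨t', _, heq⟩ := ha'
      apply hxy
      exact Subtype.ext (congrArg Prod.fst heq).symm
  set pairsSym : Finset (Sym2 V) := pairs.image (fun q => s(q.1, q.2)) with hpairsSym
  have hfib : pairs.card ≤ 2 * pairsSym.card := by
    refine Finset.card_le_mul_card_image pairs 2 ?_
    intro b _
    induction b using Sym2.ind with
    | _ u v =>
      have hsub : {a ∈ pairs | s(a.1, a.2) = s(u, v)} ⊆ {(u, v), (v, u)} := by
        intro a ha
        rw [Finset.mem_filter] at ha
        have := ha.2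
        rw [Sym2.eq_iff] at this
        rcases this with ⟨h1, h2⟩ | ⟨h1, h2⟩
        · simp [← h1, ← h2, Prod.ext_iff]
        · simp [← h1, ← h2, Prod.ext_iff]
      calc ({a ∈ pairs | s(a.1, a.2) = s(u, v)}).card ≤ ({(u, v), (v, u)} : Finset (V × V)).card :=
            Finset.card_le_card hsub
        _ ≤ 2 := Finset.card_insert_le _ _ |>.trans (by simp)
  have hsubB : (↑pairsSym : Set (Sym2 V)) ⊆
      {e : Sym2 V | ∃ u v : V, e = s(u, v) ∧ isBooster G u v} := by
    intro e he
    rw [hpairsSym] at he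
    simp only [Finset.coe_image, Set.mem_image, Finset.mem_coe] at he
    obtain ⟨⟨a, b⟩, hab, rfl⟩ := he
    rw [hpairs, Finset.mem_biUnion] at hab
    obtain ⟨s, _, hmem⟩ := hab
    simp only [Finset.mem_image] at hmem
    obtain ⟨t, ht, heq⟩ := hmem
    have h1 : a = s.1 := (congrArg Prod.fst heq).symm
    have h2 : b = t := (congrArg Prod.snd heq).symm
    subst h1 h2
    exact ⟨s.1, b, rfl, hT2 s.1 s.2 b ht⟩
  have hBcard : pairsSym.card ≤
      ({e : Sym2 V | ∃ u v : V, e = s(u, v) ∧ isBooster G u v}).ncard := by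
    rw [← Set.ncard_coe_finset pairsSym]
    exact Set.ncard_le_ncard hsubB (Set.toFinite _)
  have hmain : (k + 1) * (k + 1) ≤
      2 * ({e : Sym2 V | ∃ u v : V, e = s(u, v) ∧ isBooster G u v}).ncard := by omega
  have : ((k + 1) * (k + 1) : ℝ) ≤
      2 * (({e : Sym2 V | ∃ u v : V, e = s(u, v) ∧ isBooster G u v}).ncard : ℝ) := by
    exact_mod_cast hmain
  rw [div_le_iff₀ (by norm_num : (0:ℝ) < 2)]
  ring_nf
  ring_nf at this
  linarith
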